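/- Let B be a finite set of permutations. Av(B) contains only finitely many of the reversed vertical wedge alternations τ_m^r (m ≥ 1) if and only if B contains a permutation that avoids both of the permutations 213 and 231. -/

import Mathlib

/-- A list of naturals is a permutation (in one-line notation) of `1,…,n`
where `n` is its length. -/
def IsPermList (l : List ℕ) : Prop :=
  l.Perm ((List.range l.length).map (· + 1))

/-- `f` is an occurrence of the pattern `β` in `π`: a strictly increasing
choice of indices of `π` whose entries are order isomorphic to `β`. -/
def IsOccurrence (π β : List ℕ) (f : Fin β.length → Fin π.length) : Prop :=
  StrictMono f ∧ ∀ s t : Fin β.length, π.get (f s) < π.get (f t) ↔ β.get s < β.get t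

/-- `π` contains the pattern `β`. -/
def PContains (π β : List ℕ) : Prop :=
  ∃ f : Fin β.length → Fin π.length, IsOccurrence π β f

/-- `π` avoids the pattern `β`. -/
def PAvoids (π β : List ℕ) : Prop :=
  ¬ PContains π β

/-- The class of permutations avoiding every member of `B`. -/
def Av (B : Set (List ℕ)) : Set (List ℕ) :=
  {π | IsPermList π ∧ ∀ β ∈ B, PAvoids π β}

/-- Insert a new maximum entry at (0-indexed) position `i` of `l`. -/
def insertMax (l : List ℕ) (i : ℕ) : List ℕ :=
  l.insertIdx i (l.length + 1)

/-- Position `i` is an active site of `l` relative to `B`. -/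
def ActiveSite (B : Set (List ℕ)) (l : List ℕ) (i : ℕ) : Prop :=
  i ≤ l.length ∧ insertMax l i ∈ Av B

/-- The increasing permutation `1,2,…,n`. -/
def incrPerm (n : ℕ) : List ℕ :=
  (List.range n).map (· + 1)

/-- A permutation (as a list) is a vertical alternation: every entry in an even
(1-indexed) position lies above every entry in an odd position, or vice versa.
(Index `s : Fin l.length` corresponds to 1-indexed position `s + 1`.) -/
def VerticalAlternation (l : List ℕ) : Prop :=
  (∀ s t : Fin l.length, s.val % 2 = 1 → t.val % 2 = 0 → l.get t < l.get s) ∨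
  (∀ s t : Fin l.length, s.val % 2 = 1 → t.val % 2 = 0 → l.get s < l.get t)

/-- The subsequence of entries in positions congruent to `r` (0-indexed, mod 2)
is increasing. -/
def IncOnRes (l : List ℕ) (r : ℕ) : Prop :=
  ∀ s t : Fin l.length, s < t → s.val % 2 = r → t.val % 2 = r → l.get s < l.get t

/-- The subsequence of entries in positions congruent to `r` (0-indexed, mod 2)
is decreasing. -/
def DecOnRes (l : List ℕ) (r : ℕ) : Prop :=
  ∀ s t : Fin l.length, s < t → s.val % 2 = r → t.val % 2 = r → l.get t < l.get s

/-- A vertical parallel alternation: a vertical alternation of even length whose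
odd-position and even-position subsequences are both increasing or both decreasing. -/
def IsVertParallel (l : List ℕ) : Prop :=
  VerticalAlternation l ∧ Even l.length ∧
    ((IncOnRes l 0 ∧ IncOnRes l 1) ∨ (DecOnRes l 0 ∧ DecOnRes l 1))

/-- A vertical wedge alternation: a vertical alternation of even length for which one of
the odd-position and even-position subsequences is increasing and the other decreasing. -/
def IsVertWedge (l : List ℕ) : Prop :=
  VerticalAlternation l ∧ Even l.length ∧
    ((IncOnRes l 0 ∧ DecOnRes l 1) ∨ (DecOnRes l 0 ∧ IncOnRes l 1))

/-- The vertical parallel alternation `σ_m`, with `σ_m(2i−1) = m+1−i` and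
`σ_m(2i) = 2m+1−i` (1-indexed). -/
def sigmaAlt (m : ℕ) : List ℕ :=
  (List.range (2 * m)).map (fun j => if j % 2 = 0 then m - j / 2 else 2 * m - j / 2)

/-- The vertical wedge alternation `τ_m`, with `τ_m(2i−1) = m+i` and
`τ_m(2i) = m+1−i` (1-indexed). -/
def tauAlt (m : ℕ) : List ℕ :=
  (List.range (2 * m)).map (fun j => if j % 2 = 0 then m + j / 2 + 1 else m - j / 2)

/-- Standardization: replace each entry of `l` by its rank among the entries of `l`. -/
def stList (l : List ℕ) : List ℕ :=
  l.map (fun x => (l.filter (fun y => y ≤ x)).length)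

lemma tauAlt_length (m : ℕ) : (tauAlt m).length = 2 * m := by
  simp [tauAlt]

lemma revTau_length (m : ℕ) : (tauAlt m).reverse.length = 2 * m := by
  simp [tauAlt]

lemma revTau_get (m i : ℕ) (h : i < 2 * m) :
    (tauAlt m).reverse[i]'(by rw [revTau_length]; exact h)
      = if i % 2 = 0 then i / 2 + 1 else 2 * m - i / 2 := by
  rw [List.getElem_reverse]
  simp only [tauAlt, List.getElem_map, List.getElem_range, List.length_map, List.length_range]
  rcases Nat.mod_two_eq_zero_or_one i with hp | hp
  · rw [if_pos hp, if_neg (by omega)]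
    omega
  · rw [if_pos (show (2 * m - 1 - i) % 2 = 0 by omega),
      if_neg (show ¬ i % 2 = 0 by omega)]
    omega

lemma revTau_get_even (m a : ℕ) (h : 2 * a < 2 * m) :
    (tauAlt m).reverse[2 * a]'(by rw [revTau_length]; exact h) = a + 1 := by
  rw [revTau_get m _ h, if_pos (by omega)]; omega

lemma revTau_get_odd (m a : ℕ) (h : 2 * a + 1 < 2 * m) :
    (tauAlt m).reverse[2 * a + 1]'(by rw [revTau_length]; exact h) = 2 * m - a := by
  rw [revTau_get m _ h, if_neg (by omega)]; omega

lemma revTau_step (m : ℕ) (i j : ℕ) (hij : i < j) (hj : j < 2 * m)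
    (hi2 : i % 2 = 0) :
    (tauAlt m).reverse[i]'(by rw [revTau_length]; omega)
      < (tauAlt m).reverse[j]'(by rw [revTau_length]; omega) := by
  rw [revTau_get m i (by omega), revTau_get m j hj]
  split_ifs <;> omega

lemma revTau_step' (m : ℕ) (i j : ℕ) (hij : i < j) (hj : j < 2 * m)
    (hi2 : i % 2 = 1) :
    (tauAlt m).reverse[j]'(by rw [revTau_length]; omega)
      < (tauAlt m).reverse[i]'(by rw [revTau_length]; omega) := by
  rw [revTau_get m i (by omega), revTau_get m j hj]
  split_ifs <;> omega

lemma PContains_trans {π β γ : List ℕ} (h1 : PContains π β) (h2 : PContains β γ) :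
    PContains π γ := by
  obtain ⟨f, hf, hf2⟩ := h1
  obtain ⟨g, hg, hg2⟩ := h2
  exact ⟨f ∘ g, hf.comp hg, fun s t => (hf2 _ _).trans (hg2 s t)⟩

lemma nodup_of_isPermList {l : List ℕ} (h : IsPermList l) : l.Nodup :=
  h.nodup_iff.mpr (List.nodup_range.map (fun a b h => by omega))

lemma isPermList_revTau (m : ℕ) : IsPermList ((tauAlt m).reverse) := by
  unfold IsPermList
  rw [revTau_length]
  refine ((tauAlt m).reverse_perm).trans ?_
  have hnd : (tauAlt m).Nodup := by
    refine List.nodup_range.map_on ?_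
    intro x hx y hy hxy
    simp only [List.mem_range] at hx hy
    split_ifs at hxy <;> omega
  have hsub : tauAlt m ⊆ (List.range (2 * m)).map (· + 1) := by
    intro x hx
    simp only [tauAlt, List.mem_map, List.mem_range] at hx ⊢
    obtain ⟨j, hj, rfl⟩ := hx
    rcases Nat.mod_two_eq_zero_or_one j with h1 | h1
    · rw [if_pos h1]
      exact ⟨m + j / 2, by omega, by omega⟩
    · rw [if_neg (by omega)]
      exact ⟨m - j / 2 - 1, by omega, by omega⟩
  exact (List.subperm_of_subset hnd hsub).perm_of_length_le (by simp [tauAlt_length])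

lemma revTau_avoids213 (m : ℕ) : PAvoids ((tauAlt m).reverse) [2,1,3] := by
  rintro ⟨f, hmono, hiff⟩
  have h01 : f ⟨0, by norm_num⟩ < f ⟨1, by norm_num⟩ := hmono (by exact Fin.mk_lt_mk.mpr (by norm_num))
  have h02 : f ⟨0, by norm_num⟩ < f ⟨2, by norm_num⟩ := hmono (by exact Fin.mk_lt_mk.mpr (by norm_num))
  have h10 : (tauAlt m).reverse.get (f ⟨1, by norm_num⟩) < (tauAlt m).reverse.get (f ⟨0, by norm_num⟩) := by
    rw [hiff]; norm_num
  have h02' : (tauAlt m).reverse.get (f ⟨0, by norm_num⟩) < (tauAlt m).reverse.get (f ⟨2, by norm_num⟩) := by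
    rw [hiff]; norm_num
  set a := f ⟨0, by norm_num⟩
  set b := f ⟨1, by norm_num⟩
  set c := f ⟨2, by norm_num⟩
  have hc : (c : ℕ) < 2 * m := c.isLt.trans_eq (revTau_length m)
  simp only [List.get_eq_getElem] at h10 h02'
  rcases Nat.mod_two_eq_zero_or_one (a : ℕ) with hp | hp
  · exact absurd (revTau_step m a b (by exact_mod_cast h01) (b.isLt.trans_eq (revTau_length m)) hp) (by omega)
  · exact absurd (revTau_step' m a c (by exact_mod_cast h02) hc hp) (by omega)

lemma revTau_avoids231 (m : ℕ) : PAvoids ((tauAlt m).reverse) [2,3,1] := by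
  rintro ⟨f, hmono, hiff⟩
  have h01 : f ⟨0, by norm_num⟩ < f ⟨1, by norm_num⟩ := hmono (by exact Fin.mk_lt_mk.mpr (by norm_num))
  have h02 : f ⟨0, by norm_num⟩ < f ⟨2, by norm_num⟩ := hmono (by exact Fin.mk_lt_mk.mpr (by norm_num))
  have h10 : (tauAlt m).reverse.get (f ⟨0, by norm_num⟩) < (tauAlt m).reverse.get (f ⟨1, by norm_num⟩) := by
    rw [hiff]; norm_num
  have h02' : (tauAlt m).reverse.get (f ⟨2, by norm_num⟩) < (tauAlt m).reverse.get (f ⟨0, by norm_num⟩) := by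
    rw [hiff]; norm_num
  set a := f ⟨0, by norm_num⟩
  set b := f ⟨1, by norm_num⟩
  set c := f ⟨2, by norm_num⟩
  have hc : (c : ℕ) < 2 * m := c.isLt.trans_eq (revTau_length m)
  simp only [List.get_eq_getElem] at h10 h02'
  rcases Nat.mod_two_eq_zero_or_one (a : ℕ) with hp | hp
  · exact absurd (revTau_step m a c (by exact_mod_cast h02) hc hp) (by omega)
  · exact absurd (revTau_step' m a b (by exact_mod_cast h01) (b.isLt.trans_eq (revTau_length m)) hp) (by omega)

def Mintype (β : List ℕ) (i : Fin β.length) : Prop :=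
  ∀ j : Fin β.length, i < j → β.get i < β.get j

def Maxtype (β : List ℕ) (i : Fin β.length) : Prop :=
  ∀ j : Fin β.length, i < j → β.get j < β.get i

lemma dichotomy {β : List ℕ} (hβ : IsPermList β) (h1 : PAvoids β [2,1,3])
    (h2 : PAvoids β [2,3,1]) (i : Fin β.length) : Mintype β i ∨ Maxtype β i := by
  have hnd := nodup_of_isPermList hβ
  by_contra hcon
  rw [not_or, Mintype, Maxtype] at hcon
  push_neg at hcon
  obtain ⟨⟨j1, hj1, hj1'⟩, ⟨j2, hj2, hj2'⟩⟩ := hcon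
  have hne1 : β.get j1 ≠ β.get i := fun h => absurd (hnd.get_inj_iff.mp h) (by
    intro h; rw [h] at hj1; exact lt_irrefl _ hj1)
  have hne2 : β.get i ≠ β.get j2 := fun h => absurd (hnd.get_inj_iff.mp h) (by
    intro h; rw [← h] at hj2; exact lt_irrefl _ hj2)
  have hv1 : β.get j1 < β.get i := lt_of_le_of_ne hj1' hne1
  have hv2 : β.get i < β.get j2 := lt_of_le_of_ne hj2' hne2
  rcases lt_or_gt_of_ne (show j1 ≠ j2 from fun h => by rw [h] at hv1; omega) with hj | hj
  · refine h1 ⟨![i, j1, j2], ?_, ?_⟩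
    · intro s t hst
      fin_cases s <;> fin_cases t <;>
        first
          | exact absurd hst (by decide)
          | exact hj1
          | exact hj1.trans hj
          | exact hj
    · intro s t
      fin_cases s <;> fin_cases t <;>
        first
          | exact iff_of_false (lt_irrefl _) (by decide)
          | exact iff_of_true hv2 (by decide)
          | exact iff_of_true hv1 (by decide)
          | exact iff_of_true (hv1.trans hv2) (by decide)
          | exact iff_of_false (Nat.lt_asymm hv1) (by decide)
          | exact iff_of_false (Nat.lt_asymm hv2) (by decide)
          | exact iff_of_false (Nat.lt_asymm (hv1.trans hv2)) (by decide)
  · refine h2 ⟨![i, j2, j1], ?_, ?_⟩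
    · intro s t hst
      fin_cases s <;> fin_cases t <;>
        first
          | exact absurd hst (by decide)
          | exact hj2
          | exact hj2.trans hj
          | exact hj
    · intro s t
      fin_cases s <;> fin_cases t <;>
        first
          | exact iff_of_false (lt_irrefl _) (by decide)
          | exact iff_of_true hv2 (by decide)
          | exact iff_of_true hv1 (by decide)
          | exact iff_of_true (hv1.trans hv2) (by decide)
          | exact iff_of_false (Nat.lt_asymm hv1) (by decide)
          | exact iff_of_false (Nat.lt_asymm hv2) (by decide)
          | exact iff_of_false (Nat.lt_asymm (hv1.trans hv2)) (by decide)

lemma min_min {β : List ℕ} {s t : Fin β.length} (hs : Mintype β s)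
    (ht : Mintype β t) : β.get s < β.get t ↔ s.val < t.val := by
  constructor
  · intro h
    rcases lt_trichotomy s t with h' | h' | h'
    · exact h'
    · subst h'; exact absurd h (lt_irrefl _)
    · exact absurd (ht s h') (by omega)
  · intro h
    exact hs t h

lemma max_max {β : List ℕ} {s t : Fin β.length} (hs : Maxtype β s)
    (ht : Maxtype β t) : β.get s < β.get t ↔ t.val < s.val := by
  constructor
  · intro h
    rcases lt_trichotomy t s with h' | h' | h'
    · exact h'
    · subst h'; exact absurd h (lt_irrefl _)
    · exact absurd (hs t h') (by omega)
  · intro h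
    exact ht s h

lemma min_max {β : List ℕ} {s t : Fin β.length} (hs : Mintype β s)
    (ht : Maxtype β t) (hne : s ≠ t) : β.get s < β.get t := by
  rcases lt_trichotomy s t with h' | h' | h'
  · exact hs t h'
  · exact absurd h' hne
  · exact ht s h'

lemma contains_revTau {β : List ℕ} (hβ : IsPermList β) (h1 : PAvoids β [2,1,3])
    (h2 : PAvoids β [2,3,1]) (m : ℕ) (hm : β.length ≤ m) :
    PContains ((tauAlt m).reverse) β := by
  classical
  refine ⟨fun i => ⟨if Mintype β i then 2 * i.val else 2 * i.val + 1,
    by rw [revTau_length]; split_ifs <;> have := i.isLt <;> omega⟩, ?_, ?_⟩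
  · intro s t hst
    rw [Fin.lt_def] at hst ⊢
    simp only
    split_ifs <;> omega
  · intro s t
    have hsl := s.isLt
    have htl := t.isLt
    by_cases hs : Mintype β s <;> by_cases ht : Mintype β t <;>
      simp only [List.get_eq_getElem, hs, ht, if_true, if_false, reduceIte]
    · rw [revTau_get_even m s.val (by omega), revTau_get_even m t.val (by omega)]
      have h := min_min hs ht
      rw [List.get_eq_getElem, List.get_eq_getElem] at h
      omega
    · have ht' : Maxtype β t := (dichotomy hβ h1 h2 t).resolve_left ht
      have hne : s ≠ t := fun h => ht (h ▸ hs)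
      have h := min_max hs ht' hne
      rw [List.get_eq_getElem, List.get_eq_getElem] at h
      rw [revTau_get_even m s.val (by omega), revTau_get_odd m t.val (by omega)]
      omega
    · have hs' : Maxtype β s := (dichotomy hβ h1 h2 s).resolve_left hs
      have hne : t ≠ s := fun h => hs (h ▸ ht)
      have h := min_max ht hs' hne
      rw [List.get_eq_getElem, List.get_eq_getElem] at h
      rw [revTau_get_odd m s.val (by omega), revTau_get_even m t.val (by omega)]
      omega
    · have hs' : Maxtype β s := (dichotomy hβ h1 h2 s).resolve_left hs
      have ht' : Maxtype β t := (dichotomy hβ h1 h2 t).resolve_left ht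
      have h := max_max hs' ht'
      rw [List.get_eq_getElem, List.get_eq_getElem] at h
      rw [revTau_get_odd m s.val (by omega), revTau_get_odd m t.val (by omega)]
      omega

/-- `Av(B)` contains only finitely many of the reversed vertical wedge
alternations `τ_m^r` iff `B` contains a permutation avoiding `213` and `231`. -/
theorem stmt6 (B : Set (List ℕ)) (hBfin : B.Finite) (hB : ∀ β ∈ B, IsPermList β) :
    {π | (∃ m : ℕ, 1 ≤ m ∧ π = (tauAlt m).reverse) ∧ π ∈ Av B}.Finite ↔
      ∃ β ∈ B, PAvoids β [2,1,3] ∧ PAvoids β [2,3,1] := by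
  constructor
  · intro hfin
    by_contra hno
    push_neg at hno
    have hcont : ∀ β ∈ B, PContains β [2,1,3] ∨ PContains β [2,3,1] := by
      intro β hβ
      by_contra hc
      push_neg at hc
      exact (hno β hβ hc.1) hc.2
    have hmem : ∀ a : ℕ, (tauAlt (a + 1)).reverse ∈
        {π | (∃ m : ℕ, 1 ≤ m ∧ π = (tauAlt m).reverse) ∧ π ∈ Av B} := by
      intro a
      refine ⟨⟨a + 1, by omega, rfl⟩, isPermList_revTau (a + 1), ?_⟩
      intro β hβ hctn
      rcases hcont β hβ with h | h
      · exact revTau_avoids213 (a + 1) (PContains_trans hctn h)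
      · exact revTau_avoids231 (a + 1) (PContains_trans hctn h)
    have hinj : Function.Injective (fun a : ℕ => (tauAlt (a + 1)).reverse) := by
      intro a b hab
      have := congrArg List.length hab
      simp only [revTau_length] at this
      omega
    exact Set.infinite_of_injective_forall_mem hinj hmem hfin
  · rintro ⟨β, hβB, h1, h2⟩
    refine Set.Finite.subset ((Set.finite_Iio β.length).image
      (fun m => (tauAlt m).reverse)) ?_
    rintro π ⟨⟨m, hm1, rfl⟩, hAv⟩
    by_cases hm : β.length ≤ m
    · exact absurd (contains_revTau (hB β hβB) h1 h2 m hm) (hAv.2 β hβB)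
    · exact ⟨m, Set.mem_Iio.mpr (by omega), rfl⟩
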